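/- Let K be a C-pseudo-cone in ℝⁿ that is smooth and strictly convex inside int C, with gauge function F = -h_{K*} restricted to int C, and assume F is twice continuously differentiable on int C. For x ∈ int C let G(x) be the n×n matrix with entries G_{ij}(x) = ½ ∂²F²/∂xⁱ∂xʲ (x). Then for every x ∈ ∂K ∩ int C, the unique vector x* such that (x, x*) is a crucial pair of K satisfies x* = -G(x)x. -/

import Mathlib

open Set Pointwise RealInnerProductSpace

noncomputable section

/-- The support function of a set `K ⊆ ℝⁿ`, with values in `ℝ ∪ {∞} ⊆ EReal`. -/
def supportFn {n : ℕ} (K : Set (EuclideanSpace ℝ (Fin n))) (u : EuclideanSpace ℝ (Fin n)) :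
    EReal :=
  sSup ((fun x => ((⟪u, x⟫ : ℝ) : EReal)) '' K)

/-- The copolar set `K* = {u : ⟨u,x⟩ ≤ -1 for all x ∈ K}`. -/
def copolar {n : ℕ} (K : Set (EuclideanSpace ℝ (Fin n))) : Set (EuclideanSpace ℝ (Fin n)) :=
  {u | ∀ x ∈ K, ⟪u, x⟫ ≤ (-1 : ℝ)}

/-- The dual cone `C° = {u : ⟨u,x⟩ ≤ 0 for all x ∈ C}`. -/
def dualCone {n : ℕ} (C : Set (EuclideanSpace ℝ (Fin n))) : Set (EuclideanSpace ℝ (Fin n)) :=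
  {u | ∀ x ∈ C, ⟪u, x⟫ ≤ (0 : ℝ)}

/-- The recession cone of `K`. -/
def recessionCone {n : ℕ} (K : Set (EuclideanSpace ℝ (Fin n))) :
    Set (EuclideanSpace ℝ (Fin n)) :=
  {y | ∀ x ∈ K, ∀ t : ℝ, 0 ≤ t → x + t • y ∈ K}

/-- A pseudo-cone: a nonempty closed convex set with `0 ∉ K` and `λK ⊆ K` for `λ ≥ 1`. -/
def IsPseudoCone {n : ℕ} (K : Set (EuclideanSpace ℝ (Fin n))) : Prop :=
  K.Nonempty ∧ IsClosed K ∧ Convex ℝ K ∧ (0 : EuclideanSpace ℝ (Fin n)) ∉ K ∧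
    ∀ lam : ℝ, 1 ≤ lam → lam • K ⊆ K

/-- A pointed closed convex cone with nonempty interior. -/
def IsPointedSolidClosedCone {n : ℕ} (C : Set (EuclideanSpace ℝ (Fin n))) : Prop :=
  IsClosed C ∧ Convex ℝ C ∧ (∀ lam : ℝ, 0 ≤ lam → lam • C ⊆ C) ∧
    (interior C).Nonempty ∧ C ∩ (-C) = {0}

/-- A `C`-pseudo-cone: a pseudo-cone whose recession cone is `C`, where `C` is a
pointed closed convex cone with nonempty interior. -/
def IsCPseudoCone {n : ℕ} (C K : Set (EuclideanSpace ℝ (Fin n))) : Prop :=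
  IsPointedSolidClosedCone C ∧ IsPseudoCone K ∧ recessionCone K = C

/-- `H` is a supporting hyperplane of `K`: `H = {y : ⟨u,y⟩ = c}` for some `u ≠ 0`, with
`K` on the side `⟨u,·⟩ ≤ c` and `H` touching `K`. -/
def IsSuppHyperplane {n : ℕ} (K H : Set (EuclideanSpace ℝ (Fin n))) : Prop :=
  ∃ (u : EuclideanSpace ℝ (Fin n)) (c : ℝ), u ≠ 0 ∧ H = {y | ⟪u, y⟫ = c} ∧
    (∀ y ∈ K, ⟪u, y⟫ ≤ c) ∧ ∃ y ∈ K, ⟪u, y⟫ = c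

/-- `K` is smooth inside `int C`: each boundary point of `K` lying in `int C` is contained
in a unique supporting hyperplane of `K`. -/
def SmoothInside {n : ℕ} (K C : Set (EuclideanSpace ℝ (Fin n))) : Prop :=
  ∀ x ∈ frontier K ∩ interior C,
    ∃! H : Set (EuclideanSpace ℝ (Fin n)), IsSuppHyperplane K H ∧ x ∈ H

/-- `K` is strictly convex inside `int C`: each boundary point of `K` lying in `int C`
admits a supporting hyperplane meeting `K` only in that point. -/
def StrictlyConvexInside {n : ℕ} (K C : Set (EuclideanSpace ℝ (Fin n))) : Prop :=
  ∀ x ∈ frontier K ∩ interior C,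
    ∃ H : Set (EuclideanSpace ℝ (Fin n)), IsSuppHyperplane K H ∧ H ∩ K = {x}

/-- `(x, xs)` is a crucial pair of `K`: `x ∈ ∂K`, `xs` is an outer normal vector of `K`
at `x`, and `⟨x, xs⟩ = -1`. -/
def IsCrucialPair {n : ℕ} (K : Set (EuclideanSpace ℝ (Fin n)))
    (x xs : EuclideanSpace ℝ (Fin n)) : Prop :=
  x ∈ frontier K ∧ (∀ y ∈ K, ⟪xs, y - x⟫ ≤ (0 : ℝ)) ∧ ⟪x, xs⟫ = (-1 : ℝ)

set_option maxHeartbeats 1000000 in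
lemma auxAnalytic {n : ℕ} (F : EuclideanSpace ℝ (Fin n) → ℝ)
    (O : Set (EuclideanSpace ℝ (Fin n))) (hO : IsOpen O)
    (hF2 : ContDiffOn ℝ 2 F O) (x xs : EuclideanSpace ℝ (Fin n)) (hx : x ∈ O)
    (hcone : ∀ t : ℝ, 0 < t → ∀ y ∈ O, t • y ∈ O)
    (hhom : ∀ t : ℝ, 0 < t → ∀ y ∈ O, F (t • y) = t * F y)
    (hFx : F x = 1)
    (hub : ∀ y ∈ O, F y ≤ ⟪-xs, y⟫)
    (hnn : ∀ y ∈ O, 0 ≤ F y)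
    (hxxs : ⟪-xs, x⟫ = (1 : ℝ)) :
    ∀ i : Fin n,
      xs i = -(∑ j : Fin n,
        (fderiv ℝ (fun y => fderiv ℝ
            (fun z => (1 / 2 : ℝ) * (F z) ^ 2) y
            (EuclideanSpace.single j 1)) x (EuclideanSpace.single i 1)) * x j) := by
  set g : EuclideanSpace ℝ (Fin n) → ℝ := fun z => (1 / 2 : ℝ) * (F z) ^ 2 with hgdef
  have hg2 : ContDiffOn ℝ 2 g O := contDiffOn_const.mul (hF2.pow 2)
  have hgd : ∀ y ∈ O, DifferentiableAt ℝ g y := fun y hy =>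
    (hg2.contDiffAt (hO.mem_nhds hy)).differentiableAt two_ne_zero
  set f' : EuclideanSpace ℝ (Fin n) → (EuclideanSpace ℝ (Fin n) →L[ℝ] ℝ) :=
    fderiv ℝ g with hf'def
  have hgx2 : ContDiffAt ℝ 2 g x := hg2.contDiffAt (hO.mem_nhds hx)
  have hf'd : DifferentiableAt ℝ f' x :=
    (hgx2.fderiv_right (by norm_num : (1:WithTop ℕ∞) + 1 ≤ 2)).differentiableAt one_ne_zero
  set f'' := fderiv ℝ f' x with hf''def
  set L : EuclideanSpace ℝ (Fin n) →L[ℝ] ℝ := innerSL ℝ (-xs) with hLdef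
  have hψ : HasFDerivAt (fun y : EuclideanSpace ℝ (Fin n) => (⟪-xs, y⟫ : ℝ)) L x :=
    (innerSL ℝ (-xs)).hasFDerivAt
  -- Step A : gradient of g at x equals L
  have hgx1 : g x = 1 / 2 := by simp [hgdef, hFx]
  have hlocmin : IsLocalMin (fun y => (1 / 2 : ℝ) * (⟪-xs, y⟫ : ℝ) ^ 2 - g y) x := by
    refine Filter.eventually_of_mem (hO.mem_nhds hx) fun y hy => ?_
    have h1 : (F y) ^ 2 ≤ (⟪-xs, y⟫ : ℝ) ^ 2 := pow_le_pow_left₀ (hnn y hy) (hub y hy) 2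
    simp only [hgdef, hgx1, hxxs]
    nlinarith
  have hhalf : HasFDerivAt (fun y => (1 / 2 : ℝ) * (⟪-xs, y⟫ : ℝ) ^ 2) L x := by
    have h2 : HasFDerivAt (fun y => (⟪-xs, y⟫ : ℝ) * (⟪-xs, y⟫ : ℝ))
        ((⟪-xs, x⟫ : ℝ) • L + (⟪-xs, x⟫ : ℝ) • L) x := hψ.mul hψ
    have h3 := h2.const_mul (1 / 2 : ℝ)
    have h4 : (1 / 2 : ℝ) • ((⟪-xs, x⟫ : ℝ) • L + (⟪-xs, x⟫ : ℝ) • L) = L := by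
      rw [hxxs]; ext w; simp; ring
    rw [h4] at h3
    refine h3.congr_of_eventuallyEq (Filter.Eventually.of_forall fun y => ?_)
    ring
  have hqzero : L - f' x = 0 :=
    hlocmin.hasFDerivAt_eq_zero (hhalf.sub (hgd x hx).hasFDerivAt)
  have hgrad : f' x = L := by
    have := sub_eq_zero.mp hqzero; exact this.symm
  -- Step B : homogeneity of the derivative
  have hDg_hom : ∀ t : ℝ, 0 < t → f' (t • x) = t • f' x := by
    intro t ht
    have htx : t • x ∈ O := hcone t ht x hx
    have hid : HasFDerivAt (fun y : EuclideanSpace ℝ (Fin n) => t • y)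
        (t • ContinuousLinearMap.id ℝ (EuclideanSpace ℝ (Fin n))) x :=
      (hasFDerivAt_id x).const_smul t
    have h1 : HasFDerivAt (fun y => g (t • y))
        ((f' (t • x)).comp (t • ContinuousLinearMap.id ℝ (EuclideanSpace ℝ (Fin n)))) x :=
      (hgd _ htx).hasFDerivAt.comp x hid
    have h2 : HasFDerivAt (fun y => t ^ 2 * g y) ((t ^ 2) • f' x) x :=
      (hgd x hx).hasFDerivAt.const_mul (t ^ 2)
    have heq : (fun y => g (t • y)) =ᶠ[nhds x] (fun y => t ^ 2 * g y) := by
      refine Filter.eventuallyEq_of_mem (hO.mem_nhds hx) fun y hy => ?_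
      simp only [hgdef, hhom t ht y hy]; ring
    have h2' : HasFDerivAt (fun y => g (t • y)) ((t ^ 2) • f' x) x :=
      h2.congr_of_eventuallyEq heq
    have huniq := h1.unique h2'
    ext w
    have hw := congrArg (fun (M : EuclideanSpace ℝ (Fin n) →L[ℝ] ℝ) => M w) huniq
    simp only [ContinuousLinearMap.comp_apply, ContinuousLinearMap.smul_apply,
      ContinuousLinearMap.id_apply, map_smul, smul_eq_mul] at hw ⊢
    have ht' : t ≠ 0 := ht.ne'
    have hw2 : t * (f' (t • x)) w = t * (t * (f' x) w) := by rw [hw]; ring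
    exact mul_left_cancel₀ ht' hw2
  -- derivative of the evaluation of f'
  have hG : ∀ v : EuclideanSpace ℝ (Fin n),
      HasFDerivAt (fun y => f' y v)
        ((ContinuousLinearMap.apply ℝ ℝ v).comp f'') x :=
    fun v => (ContinuousLinearMap.apply ℝ ℝ v).hasFDerivAt.comp x hf'd.hasFDerivAt
  -- Step C : Euler relation f'' x v = f' x v for v = e i
  have heuler : ∀ v : EuclideanSpace ℝ (Fin n), f'' x v = f' x v := by
    intro v
    have hray : HasDerivAt (fun t : ℝ => t • x) x 1 := by
      have := (hasDerivAt_id (1:ℝ)).smul_const x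
      simpa using this
    have hcomp : HasDerivAt (fun t : ℝ => f' (t • x) v) (f'' x v) 1 := by
      have hGv := hG v
      rw [← one_smul ℝ x] at hGv
      have := hGv.comp_hasDerivAt 1 hray
      exact this
    have hev : (fun t : ℝ => f' (t • x) v) =ᶠ[nhds 1] (fun t : ℝ => t * (f' x v)) := by
      refine Filter.eventuallyEq_of_mem (Ioi_mem_nhds (by norm_num : (0:ℝ) < 1))
        fun t ht => ?_
      simp only [hDg_hom t ht, ContinuousLinearMap.smul_apply, smul_eq_mul]
    have hd2 : HasDerivAt (fun t : ℝ => f' (t • x) v) (f' x v) 1 :=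
      (hasDerivAt_mul_const (f' x v)).congr_of_eventuallyEq hev
    exact hcomp.unique hd2
  -- symmetry of the second derivative
  have hsymm : ∀ v w, f'' v w = f'' w v := by
    intro v w
    exact second_derivative_symmetric_of_eventually
      (Filter.eventually_of_mem (hO.mem_nhds hx) fun y hy => (hgd y hy).hasFDerivAt)
      hf'd.hasFDerivAt v w
  -- decomposition of x in the standard basis
  have hxsum : (∑ j : Fin n, x j • EuclideanSpace.single j (1:ℝ)) = x := by
    have hb := (EuclideanSpace.basisFun (Fin n) ℝ).sum_repr' x
    simpa [EuclideanSpace.basisFun_apply, EuclideanSpace.inner_single_left] using hb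
  intro i
  have hterm : ∀ j : Fin n,
      fderiv ℝ (fun y => f' y (EuclideanSpace.single j 1)) x (EuclideanSpace.single i 1)
        = f'' (EuclideanSpace.single i 1) (EuclideanSpace.single j 1) := by
    intro j
    rw [(hG (EuclideanSpace.single j 1)).fderiv]
    simp [ContinuousLinearMap.comp_apply, ContinuousLinearMap.apply_apply]
  have hsum : (∑ j : Fin n,
      (fderiv ℝ (fun y => f' y (EuclideanSpace.single j 1)) x
        (EuclideanSpace.single i 1)) * x j) = f'' x (EuclideanSpace.single i 1) := by
    calc (∑ j : Fin n,
        (fderiv ℝ (fun y => f' y (EuclideanSpace.single j 1)) x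
          (EuclideanSpace.single i 1)) * x j)
        = ∑ j : Fin n, x j * f'' (EuclideanSpace.single j 1) (EuclideanSpace.single i 1) := by
          refine Finset.sum_congr rfl fun j _ => ?_
          rw [hterm j, hsymm, mul_comm]
      _ = f'' x (EuclideanSpace.single i 1) := by
          conv_rhs => rw [← hxsum]
          rw [map_sum, ContinuousLinearMap.sum_apply]
          refine Finset.sum_congr rfl fun j _ => ?_
          rw [map_smul, ContinuousLinearMap.smul_apply, smul_eq_mul]
  rw [hsum, heuler, hgrad]
  simp [hLdef, EuclideanSpace.inner_single_right]

set_option maxHeartbeats 1000000 in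
/-- Let `K` be a `C`-pseudo-cone, smooth and strictly convex inside `int C`,
whose gauge function `F = -h_{K*}` is twice continuously differentiable on `int C`.
With `G_{ij}(x) = ½ ∂²F²/∂xⁱ∂xʲ(x)`, for every `x ∈ ∂K ∩ int C` the unique `x*`
forming a crucial pair with `x` satisfies `x* = -G(x)x`. -/
theorem crucialPair_eq_neg_matrix_apply {n : ℕ}
    (C K : Set (EuclideanSpace ℝ (Fin n))) (hK : IsCPseudoCone C K)
    (hsm : SmoothInside K C) (hsc : StrictlyConvexInside K C)
    (hF2 : ContDiffOn ℝ 2 (fun y => -(supportFn (copolar K) y).toReal) (interior C)) :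
    ∀ x ∈ frontier K ∩ interior C,
      ∀ xs : EuclideanSpace ℝ (Fin n), IsCrucialPair K x xs →
        ∀ i : Fin n,
          xs i = -(∑ j : Fin n,
            (fderiv ℝ (fun y => fderiv ℝ
                (fun z => (1 / 2) * ((-(supportFn (copolar K) z).toReal) ^ 2)) y
                (EuclideanSpace.single j 1)) x (EuclideanSpace.single i 1)) * x j) := by
  intro x hx xs hxs i
  obtain ⟨hCcone, hKpc, hrec⟩ := hK
  obtain ⟨hCclosed, hCconv, hCsmul, hCint, hCpointed⟩ := hCcone
  obtain ⟨hKne, hKclosed, hKconv, hK0, hKsmul⟩ := hKpc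
  obtain ⟨hxfr, hxint⟩ := hx
  obtain ⟨_, hnormal, hinner⟩ := hxs
  have hxK : x ∈ K := hKclosed.frontier_subset hxfr
  -- `xs` belongs to the copolar set
  have hxsK : xs ∈ copolar K := by
    intro y hy
    have h1 := hnormal y hy
    rw [inner_sub_right] at h1
    have h2 : ⟪xs, x⟫ = (-1 : ℝ) := by rw [real_inner_comm]; exact hinner
    linarith
  -- the copolar set lies in the dual cone of `C`
  have hsubdual : ∀ u ∈ copolar K, ∀ c ∈ C, ⟪u, c⟫ ≤ (0 : ℝ) := by
    intro u hu c hc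
    rw [← hrec] at hc
    obtain ⟨x₀, hx₀⟩ := hKne
    by_contra hpos
    push_neg at hpos
    have h0 := hu x₀ hx₀
    set t : ℝ := (-⟪u, x₀⟫) / ⟪u, c⟫ with htdef
    have ht0 : 0 ≤ t := div_nonneg (by linarith) hpos.le
    have hmem := hc x₀ hx₀ t ht0
    have h1 := hu _ hmem
    rw [inner_add_right, real_inner_smul_right] at h1
    have htc : t * ⟪u, c⟫ = -⟪u, x₀⟫ := div_mul_cancel₀ _ hpos.ne'
    linarith
  -- basic estimates on the support function
  have hSup_le : ∀ y ∈ C, supportFn (copolar K) y ≤ (0 : EReal) := by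
    intro y hy
    refine sSup_le ?_
    rintro _ ⟨u, hu, rfl⟩
    show ((⟪y, u⟫ : ℝ) : EReal) ≤ (0 : EReal)
    have : ⟪y, u⟫ ≤ (0 : ℝ) := by rw [real_inner_comm]; exact hsubdual u hu y hy
    exact_mod_cast this
  have hSup_ge : ∀ y : EuclideanSpace ℝ (Fin n),
      ((⟪y, xs⟫ : ℝ) : EReal) ≤ supportFn (copolar K) y :=
    fun y => le_sSup (Set.mem_image_of_mem (fun v => ((⟪y, v⟫ : ℝ) : EReal)) hxsK)
  have hne_top : ∀ y ∈ C, supportFn (copolar K) y ≠ ⊤ := fun y hy =>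
    ((hSup_le y hy).trans_lt (by simp)).ne
  have hne_bot : ∀ y : EuclideanSpace ℝ (Fin n), supportFn (copolar K) y ≠ ⊥ :=
    fun y => ((EReal.bot_lt_coe _).trans_le (hSup_ge y)).ne'
  have hReal : ∀ y ∈ C,
      (((supportFn (copolar K) y).toReal : ℝ) : EReal) = supportFn (copolar K) y :=
    fun y hy => EReal.coe_toReal (hne_top y hy) (hne_bot y)
  -- bounds for the gauge function
  have hFub : ∀ y ∈ interior C,
      -(supportFn (copolar K) y).toReal ≤ (⟪-xs, y⟫ : ℝ) := by
    intro y hy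
    have hyC : y ∈ C := interior_subset hy
    have h1 : ⟪y, xs⟫ ≤ (supportFn (copolar K) y).toReal := by
      have := EReal.toReal_le_toReal (hSup_ge y) (EReal.coe_ne_bot _) (hne_top y hyC)
      simpa using this
    have h2 : (⟪-xs, y⟫ : ℝ) = -⟪y, xs⟫ := by
      rw [inner_neg_left, real_inner_comm]
    linarith
  have hFnn : ∀ y ∈ interior C, (0 : ℝ) ≤ -(supportFn (copolar K) y).toReal := by
    intro y hy
    have hyC : y ∈ C := interior_subset hy
    have := EReal.toReal_le_toReal (hSup_le y hyC) (hne_bot y) (by simp)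
    simpa using this
  -- gauge is 1 at x
  have hSupx : supportFn (copolar K) x = ((-1 : ℝ) : EReal) := by
    refine le_antisymm ?_ ?_
    · refine sSup_le ?_
      rintro _ ⟨u, hu, rfl⟩
      show ((⟪x, u⟫ : ℝ) : EReal) ≤ ((-1 : ℝ) : EReal)
      have : ⟪x, u⟫ ≤ (-1 : ℝ) := by rw [real_inner_comm]; exact hu x hxK
      exact_mod_cast this
    · have := hSup_ge x
      rwa [hinner] at this
  have hFx1 : -(supportFn (copolar K) x).toReal = (1 : ℝ) := by
    rw [hSupx]; simp
  have hxxs' : (⟪-xs, x⟫ : ℝ) = 1 := by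
    rw [inner_neg_left, real_inner_comm, hinner]; ring
  -- the interior of C is stable under positive scaling
  have hcone' : ∀ t : ℝ, 0 < t → ∀ y ∈ interior C, t • y ∈ interior C := by
    intro t ht y hy
    have hsub : t • interior C ⊆ interior C := by
      apply interior_maximal
      · exact (Set.smul_set_mono interior_subset).trans (hCsmul t ht.le)
      · rw [← Set.image_smul]
        exact isOpenMap_smul₀ ht.ne' (interior C) isOpen_interior
    exact hsub (Set.smul_mem_smul_set hy)
  -- homogeneity of the gauge
  have lem1 : ∀ t : ℝ, 0 ≤ t → ∀ y : EuclideanSpace ℝ (Fin n), ∀ a : ℝ,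
      supportFn (copolar K) y ≤ (a : EReal) →
      supportFn (copolar K) (t • y) ≤ ((t * a : ℝ) : EReal) := by
    intro t ht y a hya
    refine sSup_le ?_
    rintro _ ⟨u, hu, rfl⟩
    show ((⟪t • y, u⟫ : ℝ) : EReal) ≤ ((t * a : ℝ) : EReal)
    have h1 : ((⟪y, u⟫ : ℝ) : EReal) ≤ (a : EReal) :=
      le_trans (le_sSup (Set.mem_image_of_mem (fun v => ((⟪y, v⟫ : ℝ) : EReal)) hu)) hya
    have h2 : ⟪y, u⟫ ≤ a := EReal.coe_le_coe_iff.mp h1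
    have h3 : (⟪t • y, u⟫ : ℝ) = t * ⟪y, u⟫ := real_inner_smul_left _ _ _
    rw [EReal.coe_le_coe_iff, h3]
    exact mul_le_mul_of_nonneg_left h2 ht
  have hhom' : ∀ t : ℝ, 0 < t → ∀ y ∈ interior C,
      -(supportFn (copolar K) (t • y)).toReal = t * (-(supportFn (copolar K) y).toReal) := by
    intro t ht y hy
    have hyC : y ∈ C := interior_subset hy
    have htyC : t • y ∈ C := hCsmul t ht.le (Set.smul_mem_smul_set hyC)
    set a : ℝ := (supportFn (copolar K) y).toReal with hadef
    set b : ℝ := (supportFn (copolar K) (t • y)).toReal with hbdef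
    have hay : supportFn (copolar K) y = (a : EReal) := (hReal y hyC).symm
    have hby : supportFn (copolar K) (t • y) = (b : EReal) := (hReal _ htyC).symm
    have h1 : b ≤ t * a := by
      have := lem1 t ht.le y a (le_of_eq hay)
      rw [hby] at this
      exact EReal.coe_le_coe_iff.mp this
    have h2 : t * a ≤ b := by
      have h3 := lem1 t⁻¹ (inv_pos.mpr ht).le (t • y) b (le_of_eq hby)
      rw [inv_smul_smul₀ ht.ne', hay] at h3
      have h4 : a ≤ t⁻¹ * b := EReal.coe_le_coe_iff.mp h3
      calc t * a ≤ t * (t⁻¹ * b) := by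
            exact mul_le_mul_of_nonneg_left h4 ht.le
        _ = b := by field_simp
    have : b = t * a := le_antisymm h1 h2
    rw [this]; ring
  exact auxAnalytic (fun y => -(supportFn (copolar K) y).toReal) (interior C)
    isOpen_interior hF2 x xs hxint hcone' hhom' hFx1 hFub hFnn hxxs' i
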